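/- For the K-state ring MDP with rewards g(i) = 1 if i ∈ {1,…,k} and 0 otherwise (k < K), and its corresponding false-ring MDP, for any γ ∈ (0,1) and any constant function f, the k-step Bellman updates differ at state s_1: T^k f(s_1) ≠ T̃^k f(s_1). Consequently the false-ring is not order-k value equivalent to the ring despite being order-K value equivalent. -/

import Mathlib

open Function Fin.NatCast

/-- For the K-state ring with rewards g = 1 on the first k states (k < K) and
its false-ring counterpart, for any γ ∈ (0,1) and any constant function, the
k-step Bellman updates differ at the initial state: T^k f (s₁) ≠ T̃^k f (s₁). -/
theorem false_ring_not_order_k_VE (k K : ℕ) [NeZero K] (hk : 0 < k) (hkK : k < K)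
    (γ : ℝ) (h0 : 0 < γ) (h1 : γ < 1)
    (g : Fin K → ℝ) (hg : ∀ i : Fin K, g i = if (i : ℕ) < k then 1 else 0)
    (T Tm : (Fin K → ℝ) → (Fin K → ℝ))
    (hT : ∀ (v : Fin K → ℝ) (s : Fin K), T v s = g s + γ * v (s + 1))
    (R : Fin K → ℝ)
    (hR : ∀ s : Fin K, R s = ∑ t ∈ Finset.range K, γ ^ t * g (s + (t : Fin K)))
    (hTm : ∀ (v : Fin K → ℝ) (s : Fin K),
      Tm v s = R s / (∑ t ∈ Finset.range K, γ ^ t) + γ * v s) :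
    ∀ c : ℝ, T^[k] (fun _ => c) 0 ≠ Tm^[k] (fun _ => c) 0 := by
  intro c
  set S : ℝ := ∑ t ∈ Finset.range K, γ ^ t with hS
  set A : ℝ := ∑ t ∈ Finset.range k, γ ^ t with hA
  have hTiter : ∀ (n : ℕ) (v : Fin K → ℝ) (s : Fin K),
      T^[n] v s = (∑ t ∈ Finset.range n, γ ^ t * g (s + (t : Fin K)))
        + γ ^ n * v (s + (n : Fin K)) := by
    intro n
    induction n with
    | zero => intro v s; simp
    | succ n ih =>
      intro v s
      rw [Function.iterate_succ_apply, ih (T v) s, hT v (s + (n : Fin K)),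
        Finset.sum_range_succ]
      have hc : ((n + 1 : ℕ) : Fin K) = (n : Fin K) + 1 := by push_cast; ring
      rw [hc, ← add_assoc]
      ring
  have hTmiter : ∀ (n : ℕ) (v : Fin K → ℝ) (s : Fin K),
      Tm^[n] v s = R s / S * (∑ t ∈ Finset.range n, γ ^ t) + γ ^ n * v s := by
    intro n
    induction n with
    | zero => intro v s; simp
    | succ n ih =>
      intro v s
      rw [Function.iterate_succ_apply, ih (Tm v) s, hTm v s, Finset.sum_range_succ]
      ring
  have hval : ∀ t : ℕ, t < K → g ((t : Fin K)) = if t < k then 1 else 0 := by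
    intro t ht
    rw [hg]
    have : ((t : Fin K) : ℕ) = t := by
      simp [Fin.val_natCast, Nat.mod_eq_of_lt ht]
    rw [this]
  have hLHS : T^[k] (fun _ => c) 0 = A + γ ^ k * c := by
    rw [hTiter k _ 0]
    have : (∑ t ∈ Finset.range k, γ ^ t * g (0 + (t : Fin K))) = A := by
      apply Finset.sum_congr rfl
      intro t ht
      have htk : t < k := Finset.mem_range.mp ht
      rw [zero_add, hval t (htk.trans hkK), if_pos htk, mul_one]
    rw [this]
  have hR0 : R 0 = A := by
    rw [hR]
    have h1' : (∑ t ∈ Finset.range K, γ ^ t * g (0 + (t : Fin K)))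
        = ∑ t ∈ Finset.range K, (if t < k then γ ^ t else 0) := by
      apply Finset.sum_congr rfl
      intro t ht
      rw [zero_add, hval t (Finset.mem_range.mp ht)]
      split <;> simp
    rw [h1']
    rw [← Finset.sum_subset (Finset.range_subset_range.2 hkK.le)
      (by intro t _ ht; rw [if_neg (by simpa using ht)])]
    apply Finset.sum_congr rfl
    intro t ht
    rw [if_pos (Finset.mem_range.mp ht)]
  have hRHS : Tm^[k] (fun _ => c) 0 = A / S * A + γ ^ k * c := by
    rw [hTmiter k _ 0, hR0]
  have hApos : 0 < A := Finset.sum_pos (fun t _ => pow_pos h0 t)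
    ⟨0, Finset.mem_range.mpr hk⟩
  have hAS : A < S := by
    apply Finset.sum_lt_sum_of_subset (Finset.range_subset_range.2 hkK.le)
      (Finset.mem_range.mpr hkK) (by simp) (pow_pos h0 k)
    intro j _ _
    exact (pow_pos h0 j).le
  have hSpos : 0 < S := hApos.trans hAS
  rw [hLHS, hRHS]
  intro heq
  have h2 : A = A / S * A := by linarith
  field_simp at h2
  linarith
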